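/- Let ι be a nonempty index set and Γ : ι → M_N(ℂ) a family of positive definite matrices. For T ∈ M_N(ℂ), the following are equivalent: (i) T Γ_i = Γ_i T* and T* Γ_i = Γ_i T for all i ∈ ι; (ii) T is Hermitian (T = T*) and T Γ_i = Γ_i T for all i ∈ ι. -/

import Mathlib

open Matrix ComplexOrder


lemma trace_ct_mul_self (n : ℕ) (A : Matrix (Fin n) (Fin n) ℂ) :
    (Aᴴ * A).trace = ((∑ j, ∑ i, Complex.normSq (A i j) : ℝ) : ℂ) := by
  push_cast
  simp [Matrix.trace, Matrix.diag, Matrix.mul_apply, Matrix.conjTranspose_apply,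
    Complex.normSq_eq_conj_mul_self]

lemma eq_zero_of_trace_eq_neg (n : ℕ) (A B : Matrix (Fin n) (Fin n) ℂ)
    (h : (Aᴴ * A).trace = -((Bᴴ * B).trace)) : A = 0 := by
  rw [trace_ct_mul_self, trace_ct_mul_self, ← Complex.ofReal_neg] at h
  have h' := Complex.ofReal_injective h
  have hA : (0:ℝ) ≤ ∑ j, ∑ i, Complex.normSq (A i j) :=
    Finset.sum_nonneg fun _ _ => Finset.sum_nonneg fun _ _ => Complex.normSq_nonneg _
  have hB : (0:ℝ) ≤ ∑ j, ∑ i, Complex.normSq (B i j) :=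
    Finset.sum_nonneg fun _ _ => Finset.sum_nonneg fun _ _ => Complex.normSq_nonneg _
  have hz : ∑ j, ∑ i, Complex.normSq (A i j) = 0 := le_antisymm (by linarith) hA
  ext i j
  have := (Finset.sum_eq_zero_iff_of_nonneg (fun _ _ => Finset.sum_nonneg
    fun _ _ => Complex.normSq_nonneg _)).mp hz j (Finset.mem_univ _)
  have := (Finset.sum_eq_zero_iff_of_nonneg (fun _ _ => Complex.normSq_nonneg _)).mp this i
    (Finset.mem_univ _)
  simpa using Complex.normSq_eq_zero.mp this

open scoped MatrixOrder in
lemma skew_anticomm_zero (n : ℕ) (Q S : Matrix (Fin n) (Fin n) ℂ)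
    (hQ : Q.PosDef) (hS : Sᴴ = -S) (hac : S * Q = -(Q * S)) : S = 0 := by
  set P := CFC.sqrt Q with hPdef
  have hPh : Pᴴ = P := (CFC.sqrt_nonneg Q).posSemidef.1
  have hPP : P * P = Q := CFC.sqrt_mul_sqrt_self Q hQ.posSemidef.nonneg
  have hQh : Qᴴ = Q := hQ.1
  -- H = S*Q is Hermitian
  have hH : (S * Q)ᴴ = S * Q := by
    rw [conjTranspose_mul, hQh, hS, Matrix.mul_neg, ← hac]
  -- M = P*S*P is skew-Hermitian
  have hM : (P * S * P)ᴴ = -(P * S * P) := by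
    rw [conjTranspose_mul, conjTranspose_mul, hPh, hS]
    noncomm_ring
  have key : ((S*Q)ᴴ * (S*Q)).trace = -(((P*S*P)ᴴ * (P*S*P)).trace) := by
    rw [hH, hM, Matrix.neg_mul, trace_neg, neg_neg]
    have e1 : P*S*P*(P*S*P) = P*(S*Q*S*P) := by
      rw [← hPP]; noncomm_ring
    have e2 : S*Q*S*P*P = S*Q*(S*Q) := by
      rw [← hPP]; noncomm_ring
    rw [e1, trace_mul_comm P (S*Q*S*P), e2]
  have hSQ0 : S * Q = 0 := eq_zero_of_trace_eq_neg _ _ _ key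
  have : IsUnit Q := hQ.isUnit
  letI := this.invertible
  calc S = S * Q * ⅟Q := by rw [Matrix.mul_assoc, mul_invOf_self, Matrix.mul_one]
    _ = 0 := by rw [hSQ0, Matrix.zero_mul]


/-- For a nonempty family `Γ` of positive definite matrices: `T Γᵢ = Γᵢ Tᴴ` and
`Tᴴ Γᵢ = Γᵢ T` for all `i` if and only if `T` is Hermitian and commutes with every `Γᵢ`. -/
theorem mem_A_cap_Astar_iff_hermitian_commutes (N : ℕ)
    (ι : Type*) [Nonempty ι]
    (Γ : ι → Matrix (Fin N) (Fin N) ℂ)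
    (hΓ : ∀ i, (Γ i).PosDef)
    (T : Matrix (Fin N) (Fin N) ℂ) :
    ((∀ i, T * Γ i = Γ i * Tᴴ) ∧ (∀ i, Tᴴ * Γ i = Γ i * T)) ↔
      (T = Tᴴ ∧ ∀ i, T * Γ i = Γ i * T) := by
  constructor
  · rintro ⟨h1, h2⟩
    obtain i₀ := Classical.arbitrary ι
    set S := T - Tᴴ with hSdef
    have hS : Sᴴ = -S := by
      simp [hSdef, conjTranspose_sub, neg_sub]
    have hac : S * (Γ i₀) = -((Γ i₀) * S) := by
      simp only [hSdef, Matrix.sub_mul, Matrix.mul_sub, h1 i₀, h2 i₀]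
      noncomm_ring
    have hS0 : S = 0 := skew_anticomm_zero N (Γ i₀) S (hΓ i₀) hS hac
    have hT : T = Tᴴ := by
      have := sub_eq_zero.mp hS0; exact this
    exact ⟨hT, fun i => by rw [h1 i, ← hT]⟩
  · rintro ⟨hT, hc⟩
    exact ⟨fun i => by rw [← hT]; exact hc i, fun i => by rw [← hT]; exact hc i⟩
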